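/- arXiv:1107.3009 — 2 statements merged into one kernel-verified Lean document; each statement's English description precedes it below -/
import Mathlib

section
/- Let R be a commutative ring, n ≥ 3 a natural number, and 𝔞 an ideal of R. Then the absolute standard commutator formulae hold: ⁅SL(n,R), E(n,R,𝔞)⁆ = E(n,R,𝔞) and ⁅E(n,R), C(n,R,𝔞)⁆ = E(n,R,𝔞). (Type A_{n−1} instance of the paper's Lemma 10, the absolute standard commutator formulae for Chevalley groups; for type A no residue-field hypothesis is needed.) -/
open Matrix
open scoped commutatorElement

/-- `SL n R` : the special linear group of degree `n` over `R`,
the simply connected Chevalley group of type `A_{n-1}`. -/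
abbrev SL (n : ℕ) (R : Type*) [CommRing R] := Matrix.SpecialLinearGroup (Fin n) R

/-- The elementary transvection `e_{ij}(a) = 1 + a·E_{ij}` as an element of `SL n R`. -/
def elemTransv {n : ℕ} {R : Type*} [CommRing R] (i j : Fin n) (h : i ≠ j) (a : R) :
    SL n R :=
  ⟨Matrix.transvection i j a, Matrix.det_transvection_of_ne i j h a⟩

/-- The set of elementary transvections with parameters in `S`. -/
def transvSet (n : ℕ) {R : Type*} [CommRing R] (S : Set R) : Set (SL n R) :=
  { x | ∃ i j : Fin n, ∃ h : i ≠ j, ∃ a ∈ S, x = elemTransv i j h a }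

/-- `E(n,S)` : the subgroup generated by elementary transvections with parameters in `S`. -/
def Esub (n : ℕ) {R : Type*} [CommRing R] (S : Set R) : Subgroup (SL n R) :=
  Subgroup.closure (transvSet n S)

/-- `E(n,T,S)` : the normal closure of `E(n,S)` in `E(n,T)`, i.e. the subgroup
generated by the conjugates of elementary generators of level `S` by elements
of `E(n,T)`. -/
def relESet (n : ℕ) {R : Type*} [CommRing R] (T S : Set R) : Subgroup (SL n R) :=
  Subgroup.closure
    { x | ∃ g ∈ Esub n T, ∃ y ∈ transvSet n S, x = g * y * g⁻¹ }

/-- `E(n,R,I)` : the relative elementary subgroup, the normal closure of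
`E(n,I)` in the absolute elementary subgroup `E(n,R)`. -/
def relE (n : ℕ) {R : Type*} [CommRing R] (I : Ideal R) : Subgroup (SL n R) :=
  relESet n (Set.univ : Set R) (I : Set R)

/-- The reduction homomorphism `SL(n,R) → SL(n,R/I)`. -/
def redMap (n : ℕ) {R : Type*} [CommRing R] (I : Ideal R) : SL n R →* SL n (R ⧸ I) :=
  Matrix.SpecialLinearGroup.map (Ideal.Quotient.mk I)

/-- `SL(n,R,I)` : the principal congruence subgroup of level `I`. -/
def SLcong (n : ℕ) {R : Type*} [CommRing R] (I : Ideal R) : Subgroup (SL n R) :=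
  (redMap n I).ker

/-- `C(n,R,I)` : the full congruence subgroup of level `I`. -/
def Ccong (n : ℕ) {R : Type*} [CommRing R] (I : Ideal R) : Subgroup (SL n R) :=
  Subgroup.comap (redMap n I) (Subgroup.center (SL n (R ⧸ I)))

namespace ACF

variable {R : Type*} [CommRing R] {n : ℕ}

/-! ### Matrix toolkit -/

theorem vmv_mul_vmv (x z x' z' : Fin n → R) :
    vecMulVec x z * vecMulVec x' z' = (z ⬝ᵥ x') • vecMulVec x z' := by
  ext a b
  simp [vecMulVec_apply, mul_apply, dotProduct, Finset.mul_sum, Finset.sum_mul]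
  congr 1; funext k; ring

theorem vmv_add_right (x z z' : Fin n → R) :
    vecMulVec x (z + z') = vecMulVec x z + vecMulVec x z' := by
  ext a b; simp [vecMulVec_apply]; ring

theorem vmv_add_left (x x' z : Fin n → R) :
    vecMulVec (x + x') z = vecMulVec x z + vecMulVec x' z := by
  ext a b; simp [vecMulVec_apply]; ring

theorem vmv_neg_left (x z : Fin n → R) :
    vecMulVec (-x) z = -vecMulVec x z := by
  ext a b; simp [vecMulVec_apply]

theorem vmv_neg_right (x z : Fin n → R) :
    vecMulVec x (-z) = -vecMulVec x z := by
  ext a b; simp [vecMulVec_apply]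

theorem vmv_zero_right (x : Fin n → R) : vecMulVec x (0 : Fin n → R) = 0 := by
  ext a b; simp [vecMulVec_apply]

theorem vmv_zero_left (z : Fin n → R) : vecMulVec (0 : Fin n → R) z = 0 := by
  ext a b; simp [vecMulVec_apply]

theorem one_add_vmv_mul' (x z x' z' : Fin n → R) (h : z ⬝ᵥ x' = 0) :
    (1 + vecMulVec x z) * (1 + vecMulVec x' z')
      = 1 + (vecMulVec x z + vecMulVec x' z') := by
  simp only [mul_add, add_mul, one_mul, mul_one, vmv_mul_vmv, h, zero_smul, add_zero,
    add_assoc]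

theorem mul_vmv (M : Matrix (Fin n) (Fin n) R) (x z : Fin n → R) :
    M * vecMulVec x z = vecMulVec (M *ᵥ x) z := by
  ext a b
  simp [vecMulVec_apply, mul_apply, mulVec, dotProduct, Finset.sum_mul]
  congr 1; funext k; ring

theorem vmv_mul (M : Matrix (Fin n) (Fin n) R) (x z : Fin n → R) :
    vecMulVec x z * M = vecMulVec x (z ᵥ* M) := by
  ext a b
  simp [vecMulVec_apply, mul_apply, vecMul, dotProduct, Finset.mul_sum]
  congr 1; funext k; ring

/-! ### Transvections -/

theorem coe_elemTransv (i j : Fin n) (h : i ≠ j) (a : R) :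
    (elemTransv i j h a : Matrix (Fin n) (Fin n) R)
      = 1 + vecMulVec (Pi.single i 1) (Pi.single j a) := by
  show Matrix.transvection i j a = _
  unfold Matrix.transvection
  congr 1
  ext p q
  by_cases hp : p = i <;> by_cases hq : q = j <;>
    simp [hp, hq, Matrix.single, vecMulVec_apply, Pi.single_apply, Ne.symm,
      fun h' => (Ne.symm h' : i ≠ p), fun h' => (Ne.symm h' : j ≠ q)]

theorem elemTransv_mul (i j : Fin n) (h : i ≠ j) (a b : R) :
    elemTransv i j h a * elemTransv i j h b = elemTransv i j h (a + b) :=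
  Subtype.ext (Matrix.transvection_mul_transvection_same i j h a b)

theorem elemTransv_zero (i j : Fin n) (h : i ≠ j) : elemTransv i j h (0 : R) = 1 := by
  apply Subtype.ext
  show Matrix.transvection i j (0 : R) = _
  rw [Matrix.transvection_zero]
  rfl

theorem elemTransv_inv (i j : Fin n) (h : i ≠ j) (a : R) :
    (elemTransv i j h a)⁻¹ = elemTransv i j h (-a) := by
  symm
  apply eq_inv_of_mul_eq_one_left
  rw [elemTransv_mul, neg_add_cancel, elemTransv_zero]

theorem chevalley (i j k : Fin n) (hij : i ≠ j) (hjk : j ≠ k) (hik : i ≠ k) (a b : R) :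
    ⁅elemTransv i j hij a, elemTransv j k hjk b⁆ = elemTransv i k hik (a * b) := by
  rw [commutatorElement_def, elemTransv_inv, elemTransv_inv]
  apply Subtype.ext
  show ((((elemTransv i j hij a * elemTransv j k hjk b) * elemTransv i j hij (-a)) *
      elemTransv j k hjk (-b) : SL n R) : Matrix (Fin n) (Fin n) R) = _
  rw [Matrix.SpecialLinearGroup.coe_mul, Matrix.SpecialLinearGroup.coe_mul,
    Matrix.SpecialLinearGroup.coe_mul, coe_elemTransv, coe_elemTransv, coe_elemTransv,
    coe_elemTransv, coe_elemTransv]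
  simp only [mul_add, add_mul, mul_one, one_mul, vmv_mul_vmv, smul_mul_assoc, mul_smul_comm,
    single_dotProduct, Pi.single_apply, if_neg hij.symm, if_neg hjk.symm, if_neg hik.symm,
    if_pos rfl, mul_zero, zero_smul, smul_zero, mul_one, add_zero, zero_add, smul_smul, one_smul]
  ext p q
  simp only [Matrix.add_apply, Matrix.smul_apply, vecMulVec_apply, Pi.single_apply, smul_eq_mul]
  split_ifs <;> ring


/-! ### Membership basics -/

theorem transv_mem_Esub (i j : Fin n) (h : i ≠ j) (a : R) :
    elemTransv i j h a ∈ Esub n (Set.univ : Set R) :=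
  Subgroup.subset_closure ⟨i, j, h, a, trivial, rfl⟩

theorem conj_transv_mem_relE {𝔞 : Ideal R} {g : SL n R} (hg : g ∈ Esub n (Set.univ : Set R))
    (i j : Fin n) (h : i ≠ j) {a : R} (ha : a ∈ 𝔞) :
    g * elemTransv i j h a * g⁻¹ ∈ relE n 𝔞 :=
  Subgroup.subset_closure ⟨g, hg, elemTransv i j h a, ⟨i, j, h, a, ha, rfl⟩, rfl⟩

theorem transv_mem_relE {𝔞 : Ideal R} (i j : Fin n) (h : i ≠ j) {a : R} (ha : a ∈ 𝔞) :
    elemTransv i j h a ∈ relE n 𝔞 := by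
  have := conj_transv_mem_relE (g := 1) (Subgroup.one_mem _) i j h ha
  simpa using this

/-! ### The Suslin vectors -/

/-- `Zv v c p q = c·(v p · e_q - v q · e_p)`. -/
def Zv (v : Fin n → R) (c : R) (p q : Fin n) : Fin n → R :=
  Pi.single q (c * v p) - Pi.single p (c * v q)

theorem Zv_dot (v : Fin n → R) (c : R) (p q : Fin n) : Zv v c p q ⬝ᵥ v = 0 := by
  simp [Zv, sub_dotProduct, single_dotProduct]
  ring

theorem Zv_apply_of_ne (v : Fin n → R) (c : R) {p q r : Fin n} (hrp : r ≠ p) (hrq : r ≠ q) :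
    Zv v c p q r = 0 := by
  simp [Zv, Pi.single_apply, if_neg hrp, if_neg hrq]

theorem Zv_dot_single (v : Fin n → R) (c : R) {p q r : Fin n} (hrp : r ≠ p) (hrq : r ≠ q)
    (x : R) : Zv v c p q ⬝ᵥ Pi.single r x = 0 := by
  rw [dotProduct_single, Zv_apply_of_ne v c hrp hrq, zero_mul]

theorem Zv_neg (v : Fin n → R) (c : R) (p q : Fin n) : Zv v (-c) p q = - Zv v c p q := by
  funext k
  simp [Zv, Pi.single_apply]
  split_ifs <;> ring

/-! ### The building blocks of the Suslin factorisation -/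

section Blocks

variable (v : Fin n → R) (c : R) (p q r : Fin n)

/-- The column matrix `A = 1 + v'·e_rᵀ`, as a product of elementary transvections. -/
def Aelt : SL n R :=
  ((List.finRange n).map fun s => if h : s = r then 1 else elemTransv s r h (v s)).prod

theorem Aelt_coe_aux (l : List (Fin n)) (hl : l.Nodup) :
    (((l.map fun s => if h : s = r then 1 else elemTransv s r h (v s)).prod : SL n R) :
        Matrix (Fin n) (Fin n) R)
      = 1 + vecMulVec (fun k => if k ∈ l ∧ k ≠ r then v k else 0) (Pi.single r 1) := by
  induction l with
  | nil =>
      simp only [List.map_nil, List.prod_nil]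
      have : (fun k : Fin n => if k ∈ ([] : List (Fin n)) ∧ k ≠ r then v k else 0)
          = (0 : Fin n → R) := by
        funext k; simp
      rw [this, vmv_zero_left, add_zero]
      rfl
  | cons a l ih =>
      have hnd := List.nodup_cons.mp hl
      rw [List.map_cons, List.prod_cons, Matrix.SpecialLinearGroup.coe_mul, ih hnd.2]
      by_cases har : a = r
      · subst har
        rw [dif_pos rfl]
        have : (fun k : Fin n => if k ∈ a :: l ∧ k ≠ a then v k else 0)
            = (fun k : Fin n => if k ∈ l ∧ k ≠ a then v k else 0) := by
          funext k
          by_cases hk : k = a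
          · simp [hk]
          · simp [hk, List.mem_cons]
        rw [this, Matrix.SpecialLinearGroup.coe_one, one_mul]
      · rw [dif_neg har, coe_elemTransv]
        have hsingle : vecMulVec (Pi.single a (1:R)) (Pi.single r (v a))
            = vecMulVec (Pi.single a (v a)) (Pi.single r (1:R)) := by
          ext s t
          simp only [vecMulVec_apply, Pi.single_apply]
          split_ifs <;> ring
        have hd : (Pi.single r (1:R)) ⬝ᵥ (fun k => if k ∈ l ∧ k ≠ r then v k else 0) = 0 := by
          rw [single_dotProduct]; simp
        rw [hsingle, one_add_vmv_mul' _ _ _ _ hd, ← vmv_add_left]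
        have : Pi.single a (v a) + (fun k => if k ∈ l ∧ k ≠ r then v k else 0)
            = fun k => if k ∈ a :: l ∧ k ≠ r then v k else 0 := by
          funext k
          by_cases hk : k = a
          · subst hk
            simp [har, hnd.1, Pi.single_apply]
          · simp [Pi.single_apply, hk, List.mem_cons]
        rw [this]

theorem coe_Aelt :
    ((Aelt v r : SL n R) : Matrix (Fin n) (Fin n) R)
      = 1 + vecMulVec (Function.update v r 0) (Pi.single r 1) := by
  rw [Aelt, Aelt_coe_aux v r _ (List.nodup_finRange n)]
  have : (fun k : Fin n => if k ∈ List.finRange n ∧ k ≠ r then v k else 0)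
      = Function.update v r 0 := by
    funext k
    by_cases hk : k = r <;> simp [Function.update_apply, hk, List.mem_finRange]
  rw [this]

theorem Aelt_mem_Esub : Aelt v r ∈ Esub n (Set.univ : Set R) := by
  apply Subgroup.list_prod_mem
  intro x hx
  simp only [List.mem_map] at hx
  obtain ⟨s, -, rfl⟩ := hx
  by_cases h : s = r
  · rw [dif_pos h]; exact Subgroup.one_mem _
  · rw [dif_neg h]; exact transv_mem_Esub _ _ _ _

theorem upd_neg : Function.update (-v) r (0:R) = -(Function.update v r 0) := by
  funext k; by_cases hk : k = r <;> simp [Function.update_apply, hk]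

theorem single_dot_upd : Pi.single r (1:R) ⬝ᵥ Function.update v r 0 = 0 := by
  rw [single_dotProduct]; simp

theorem Aelt_inv_eq : (Aelt v r)⁻¹ = Aelt (-v) r := by
  symm
  apply eq_inv_of_mul_eq_one_right
  apply Subtype.ext
  rw [Matrix.SpecialLinearGroup.coe_mul, coe_Aelt, coe_Aelt, upd_neg]
  have hd : Pi.single r (1:R) ⬝ᵥ (-(Function.update v r 0)) = 0 := by
    rw [dotProduct_neg, single_dot_upd, neg_zero]
  rw [one_add_vmv_mul' _ _ _ _ hd, vmv_neg_left, add_neg_cancel, add_zero]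
  rfl

theorem coe_Aelt_inv :
    (((Aelt v r)⁻¹ : SL n R) : Matrix (Fin n) (Fin n) R)
      = 1 + vecMulVec (-(Function.update v r 0)) (Pi.single r 1) := by
  rw [Aelt_inv_eq, coe_Aelt, upd_neg]

end Blocks

theorem one_add_vmv_mul_full (x z x' z' : Fin n → R) :
    (1 + vecMulVec x z) * (1 + vecMulVec x' z')
      = 1 + vecMulVec x z + vecMulVec x' z' + (z ⬝ᵥ x') • vecMulVec x z' := by
  rw [mul_add, add_mul, add_mul, one_mul, one_mul, mul_one, vmv_mul_vmv]
  abel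

section Blocks2

variable (v : Fin n → R) (c : R) {p q r : Fin n} (hrp : r ≠ p) (hrq : r ≠ q)

/-- `B = 1 + e_r·(c Y)ᵀ` as a product of two elementary transvections. -/
def Belt : SL n R :=
  elemTransv r p hrp (-(c * v q)) * elemTransv r q hrq (c * v p)

theorem elemTransv_row_comm {p' q' : Fin n} (hrp' : r ≠ p') (hrq' : r ≠ q') (x y : R) :
    elemTransv r p' hrp' x * elemTransv r q' hrq' y
      = elemTransv r q' hrq' y * elemTransv r p' hrp' x := by
  apply Subtype.ext
  rw [Matrix.SpecialLinearGroup.coe_mul, Matrix.SpecialLinearGroup.coe_mul,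
    coe_elemTransv, coe_elemTransv]
  have h1 : Pi.single p' x ⬝ᵥ Pi.single r (1:R) = 0 := by
    rw [dotProduct_single]; simp [Pi.single_apply, hrp']
  have h2 : Pi.single q' y ⬝ᵥ Pi.single r (1:R) = 0 := by
    rw [dotProduct_single]; simp [Pi.single_apply, hrq']
  rw [one_add_vmv_mul' _ _ _ _ h1, one_add_vmv_mul' _ _ _ _ h2, add_comm (vecMulVec _ _)]

theorem coe_Belt :
    ((Belt v c hrp hrq : SL n R) : Matrix (Fin n) (Fin n) R)
      = 1 + vecMulVec (Pi.single r 1) (Zv v c p q) := by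
  rw [Belt, Matrix.SpecialLinearGroup.coe_mul, coe_elemTransv, coe_elemTransv]
  have h1 : Pi.single p (-(c * v q)) ⬝ᵥ Pi.single r (1:R) = 0 := by
    rw [dotProduct_single]; simp [Pi.single_apply, hrp]
  rw [one_add_vmv_mul' _ _ _ _ h1, ← vmv_add_right]
  have : Pi.single p (-(c * v q)) + Pi.single q (c * v p) = Zv v c p q := by
    funext k
    simp only [Zv, Pi.add_apply, Pi.sub_apply, Pi.single_apply]
    split_ifs <;> ring
  rw [this]

theorem Belt_inv_eq : (Belt v c hrp hrq)⁻¹ = Belt v (-c) hrp hrq := by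
  rw [Belt, Belt, _root_.mul_inv_rev, elemTransv_inv, elemTransv_inv,
    elemTransv_row_comm hrq hrp]
  congr 1
  · congr 1
    ring
  · congr 1
    ring

theorem coe_Belt_inv :
    (((Belt v c hrp hrq)⁻¹ : SL n R) : Matrix (Fin n) (Fin n) R)
      = 1 + -vecMulVec (Pi.single r 1) (Zv v c p q) := by
  rw [Belt_inv_eq, coe_Belt, Zv_neg, vmv_neg_right]

/-- The tail `T = 1 + (v r)·e_r·(c Y)ᵀ` as a product of two elementary transvections. -/
def Tt : SL n R :=
  elemTransv r p hrp (-(c * (v r * v q))) * elemTransv r q hrq (c * (v r * v p))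

theorem coe_Tt :
    ((Tt v c hrp hrq : SL n R) : Matrix (Fin n) (Fin n) R)
      = 1 + vecMulVec (Pi.single r (v r)) (Zv v c p q) := by
  rw [Tt, Matrix.SpecialLinearGroup.coe_mul, coe_elemTransv, coe_elemTransv]
  have h1 : Pi.single p (-(c * (v r * v q))) ⬝ᵥ Pi.single r (1:R) = 0 := by
    rw [dotProduct_single]; simp [Pi.single_apply, hrp]
  rw [one_add_vmv_mul' _ _ _ _ h1, ← vmv_add_right]
  congr 1
  ext s t
  simp only [vecMulVec_apply, Pi.add_apply, Pi.sub_apply, Pi.single_apply, Zv]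
  split_ifs <;> ring

/-- The Suslin block `G = 1 + v·(c·(v_p e_q - v_q e_p))ᵀ` as an explicit element of the
relative elementary group data. -/
def mkG : SL n R :=
  Aelt v r * Belt v c hrp hrq * (Aelt v r)⁻¹ * (Belt v c hrp hrq)⁻¹ * Tt v c hrp hrq

theorem coe_mkG :
    ((mkG v c hrp hrq : SL n R) : Matrix (Fin n) (Fin n) R)
      = 1 + vecMulVec v (Zv v c p q) := by
  have hvd : Function.update v r 0 = v - Pi.single r (v r) := by
    funext k
    by_cases hk : k = r <;> simp [Function.update_apply, Pi.single_apply, hk]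
  have hv : v = Function.update v r 0 + Pi.single r (v r) := by
    rw [hvd, sub_add_cancel]
  have d1 : Pi.single r (1:R) ⬝ᵥ Function.update v r 0 = 0 := single_dot_upd v r
  have d2 : Pi.single r (1:R) ⬝ᵥ Pi.single r (1:R) = (1:R) := by
    rw [single_dotProduct]; simp
  have d3 : Zv v c p q ⬝ᵥ Function.update v r 0 = 0 := by
    rw [hvd, dotProduct_sub, dotProduct_single, Zv_dot,
      Zv_apply_of_ne v c hrp hrq, zero_mul, sub_zero]
  have d4 : Zv v c p q ⬝ᵥ Pi.single r (1:R) = 0 := by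
    rw [dotProduct_single, Zv_apply_of_ne v c hrp hrq, zero_mul]
  have d5 : Pi.single r (1:R) ⬝ᵥ Pi.single r (v r) = v r := by
    rw [single_dotProduct]; simp
  have d6 : Zv v c p q ⬝ᵥ Pi.single r (v r) = 0 := Zv_dot_single v c hrp hrq (v r)
  rw [mkG, Matrix.SpecialLinearGroup.coe_mul, Matrix.SpecialLinearGroup.coe_mul,
    Matrix.SpecialLinearGroup.coe_mul, Matrix.SpecialLinearGroup.coe_mul,
    coe_Aelt, coe_Belt, coe_Aelt_inv, coe_Belt_inv, coe_Tt, vmv_neg_left]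
  rw [show (1 + vecMulVec (Function.update v r 0) (Pi.single r 1)) *
      (1 + vecMulVec (Pi.single r 1) (Zv v c p q)) = _ from
    one_add_vmv_mul_full _ _ _ _, d2, one_smul]
  conv_rhs => rw [show vecMulVec v (Zv v c p q)
      = vecMulVec (Function.update v r 0) (Zv v c p q)
        + vecMulVec (Pi.single r (v r)) (Zv v c p q) from by rw [← vmv_add_left, ← hv]]
  simp only [mul_add, add_mul, one_mul, mul_one, neg_mul, mul_neg, vmv_mul_vmv,
    d1, d2, d3, d4, d5, d6, zero_smul, one_smul, smul_zero, neg_zero, neg_neg,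
    add_zero, zero_add, smul_neg]
  abel

end Blocks2

section Factorisation

variable {𝔞 : Ideal R}

theorem mkG_mem_relE (v : Fin n → R) {c : R} {p q r : Fin n} (hrp : r ≠ p) (hrq : r ≠ q)
    (hc : c ∈ 𝔞) : mkG v c hrp hrq ∈ relE n 𝔞 := by
  have hb : Aelt v r * Belt v c hrp hrq * (Aelt v r)⁻¹
      = (Aelt v r * elemTransv r p hrp (-(c * v q)) * (Aelt v r)⁻¹)
        * (Aelt v r * elemTransv r q hrq (c * v p) * (Aelt v r)⁻¹) := by
    rw [Belt]; group
  rw [mkG, hb]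
  have hA := Aelt_mem_Esub v r
  refine Subgroup.mul_mem _ (Subgroup.mul_mem _ (Subgroup.mul_mem _ ?_ ?_) ?_) ?_
  · exact conj_transv_mem_relE hA r p hrp (Submodule.neg_mem _ (Ideal.mul_mem_right _ _ hc))
  · exact conj_transv_mem_relE hA r q hrq (Ideal.mul_mem_right _ _ hc)
  · rw [Belt_inv_eq, Belt]
    exact Subgroup.mul_mem _
      (transv_mem_relE r p hrp (Submodule.neg_mem _ (Ideal.mul_mem_right _ _
        (Submodule.neg_mem _ hc))))
      (transv_mem_relE r q hrq (Ideal.mul_mem_right _ _ (Submodule.neg_mem _ hc)))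
  · rw [Tt]
    exact Subgroup.mul_mem _
      (transv_mem_relE r p hrp (Submodule.neg_mem _ (Ideal.mul_mem_right _ _ hc)))
      (transv_mem_relE r q hrq (Ideal.mul_mem_right _ _ hc))

theorem mkG_mul_neg (v : Fin n → R) (c : R) {p q r : Fin n} (hrp : r ≠ p) (hrq : r ≠ q) :
    mkG v c hrp hrq * mkG v (-c) hrp hrq = 1 := by
  apply Subtype.ext
  rw [Matrix.SpecialLinearGroup.coe_mul, coe_mkG, coe_mkG, Zv_neg, vmv_neg_right]
  simp only [mul_add, add_mul, one_mul, mul_one, mul_neg, neg_mul, vmv_mul_vmv, Zv_dot,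
    zero_smul, neg_zero, add_zero]
  rw [Matrix.SpecialLinearGroup.coe_one]
  abel

theorem mkG_inv_eq (v : Fin n → R) (c : R) {p q r : Fin n} (hrp : r ≠ p) (hrq : r ≠ q) :
    (mkG v c hrp hrq)⁻¹ = mkG v (-c) hrp hrq :=
  (eq_inv_of_mul_eq_one_right (mkG_mul_neg v c hrp hrq)).symm

theorem exists_third (hn3 : 3 ≤ n) (p q : Fin n) : ∃ r : Fin n, r ≠ p ∧ r ≠ q := by
  by_contra h
  push_neg at h
  have hsub : (Finset.univ : Finset (Fin n)) ⊆ {p, q} := by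
    intro r _
    rcases em (r = p) with hr | hr
    · simp [hr]
    · simp [h r hr]
  have := Finset.card_le_card hsub
  rw [Finset.card_univ, Fintype.card_fin] at this
  have h2 : ({p, q} : Finset (Fin n)).card ≤ 2 :=
    (Finset.card_insert_le _ _).trans (by simp)
  omega

theorem sum_dot_zero {ι : Type} (S : Finset ι) (f : ι → Fin n → R) (v : Fin n → R)
    (h : ∀ x ∈ S, f x ⬝ᵥ v = 0) : (∑ x ∈ S, f x) ⬝ᵥ v = 0 := by
  classical
  induction S using Finset.induction_on with
  | empty => simp [dotProduct]
  | insert a s ha ih =>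
      rw [Finset.sum_insert ha, add_dotProduct, h a (Finset.mem_insert_self a s),
        ih fun x hx => h x (Finset.mem_insert_of_mem hx), add_zero]

theorem mem_relE_of_coe_eq {ι : Type} (hn3 : 3 ≤ n) (v : Fin n → R) (S : Finset ι)
    (cf : ι → R) (pf qf : ι → Fin n) (hc : ∀ x ∈ S, cf x ∈ 𝔞) (T : SL n R)
    (hT : (T : Matrix (Fin n) (Fin n) R)
      = 1 + vecMulVec v (∑ x ∈ S, Zv v (cf x) (pf x) (qf x))) :
    T ∈ relE n 𝔞 := by
  classical
  induction S using Finset.induction_on generalizing T with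
  | empty =>
      rw [Finset.sum_empty, vmv_zero_right, add_zero] at hT
      have : T = 1 := Subtype.ext hT
      rw [this]
      exact Subgroup.one_mem _
  | insert a s ha ih =>
      obtain ⟨r, hrp, hrq⟩ := exists_third hn3 (pf a) (qf a)
      have hstep : T = (T * mkG v (-(cf a)) hrp hrq) * mkG v (cf a) hrp hrq := by
        rw [mul_assoc]
        have : mkG v (-(cf a)) hrp hrq * mkG v (cf a) hrp hrq = 1 := by
          have := mkG_mul_neg v (-(cf a)) hrp hrq
          rwa [neg_neg] at this
        rw [this, mul_one]
      rw [hstep]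
      refine Subgroup.mul_mem _ (ih (fun x hx => hc x (Finset.mem_insert_of_mem hx)) _ ?_)
        (mkG_mem_relE v hrp hrq (hc a (Finset.mem_insert_self a s)))
      rw [Matrix.SpecialLinearGroup.coe_mul, hT, coe_mkG, Zv_neg, vmv_neg_right,
        Finset.sum_insert ha]
      have hZa : Zv v (cf a) (pf a) (qf a) ⬝ᵥ v = 0 := Zv_dot v (cf a) _ _
      have hsum0 : (∑ x ∈ s, Zv v (cf x) (pf x) (qf x)) ⬝ᵥ v = 0 :=
        sum_dot_zero s _ v fun x _ => Zv_dot v (cf x) _ _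
      simp only [mul_add, add_mul, one_mul, mul_one, mul_neg, neg_mul, vmv_mul_vmv, hZa,
        hsum0, add_dotProduct, zero_smul, smul_zero, neg_zero, add_zero, zero_add,
        vmv_add_right]
      abel

/-- The key sum identity : the decomposition of `t·w` into Suslin blocks. -/
theorem sum_Zv_eq (v u w : Fin n → R) (t : R) :
    ∑ x : Fin n × Fin n, Zv v (t * (u x.1 * w x.2)) x.1 x.2
      = (t * (u ⬝ᵥ v)) • w - (t * (w ⬝ᵥ v)) • u := by
  funext k
  rw [Finset.sum_apply, Fintype.sum_prod_type]
  simp only [Zv, Pi.sub_apply, Pi.single_apply, Finset.sum_sub_distrib]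
  have hA : (∑ p : Fin n, ∑ q : Fin n, if k = q then t * (u p * w q) * v p else 0)
      = t * (u ⬝ᵥ v) * w k := by
    simp only [Finset.sum_ite_eq, Finset.mem_univ, if_true]
    rw [dotProduct, Finset.mul_sum, Finset.sum_mul]
    exact Finset.sum_congr rfl fun p _ => by ring
  have hB : (∑ p : Fin n, ∑ q : Fin n, if k = p then t * (u p * w q) * v q else 0)
      = t * (w ⬝ᵥ v) * u k := by
    rw [Finset.sum_comm]
    simp only [Finset.sum_ite_eq, Finset.mem_univ, if_true]
    rw [dotProduct, Finset.mul_sum, Finset.sum_mul]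
    exact Finset.sum_congr rfl fun p _ => by ring
  rw [hA, hB]
  simp only [Pi.sub_apply, Pi.smul_apply, smul_eq_mul]

end Factorisation

section Normality

variable {𝔞 : Ideal R}

theorem coe_mul_inv (g : SL n R) :
    (g : Matrix (Fin n) (Fin n) R) * ((g⁻¹ : SL n R) : Matrix (Fin n) (Fin n) R) = 1 := by
  rw [← Matrix.SpecialLinearGroup.coe_mul, mul_inv_cancel, Matrix.SpecialLinearGroup.coe_one]

theorem coe_inv_mul (g : SL n R) :
    ((g⁻¹ : SL n R) : Matrix (Fin n) (Fin n) R) * (g : Matrix (Fin n) (Fin n) R) = 1 := by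
  rw [← Matrix.SpecialLinearGroup.coe_mul, inv_mul_cancel, Matrix.SpecialLinearGroup.coe_one]

theorem coe_conj_transv (g : SL n R) (i j : Fin n) (hij : i ≠ j) (t : R) :
    ((g * elemTransv i j hij t * g⁻¹ : SL n R) : Matrix (Fin n) (Fin n) R)
      = 1 + vecMulVec (fun k => (g : Matrix (Fin n) (Fin n) R) k i)
          (fun k => t * ((g⁻¹ : SL n R) : Matrix (Fin n) (Fin n) R) j k) := by
  rw [Matrix.SpecialLinearGroup.coe_mul, Matrix.SpecialLinearGroup.coe_mul, coe_elemTransv,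
    mul_add, mul_one, add_mul, coe_mul_inv, mul_vmv, vmv_mul, mulVec_single, single_vecMul]
  have : (fun k => (g : Matrix (Fin n) (Fin n) R) k i * 1)
      = fun k => (g : Matrix (Fin n) (Fin n) R) k i := funext fun k => mul_one _
  congr 1; ext a b; simp [vecMulVec_apply]

/-- Relative Suslin normality : any `SL_n`-conjugate of an elementary transvection of
level `𝔞` lies in the relative elementary subgroup. -/
theorem conj_transv_mem (hn3 : 3 ≤ n) (g : SL n R) (i j : Fin n) (hij : i ≠ j) {t : R}
    (ht : t ∈ 𝔞) : g * elemTransv i j hij t * g⁻¹ ∈ relE n 𝔞 := by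
  set M : Matrix (Fin n) (Fin n) R := (g : Matrix (Fin n) (Fin n) R) with hM
  set M' : Matrix (Fin n) (Fin n) R := ((g⁻¹ : SL n R) : Matrix (Fin n) (Fin n) R) with hM'
  set v : Fin n → R := fun k => M k i with hv
  set u : Fin n → R := fun k => M' i k with hu
  set w : Fin n → R := fun k => M' j k with hw
  have huv : u ⬝ᵥ v = 1 := by
    have := coe_inv_mul g
    calc u ⬝ᵥ v = (M' * M) i i := by rw [Matrix.mul_apply]; rfl
    _ = 1 := by rw [this, Matrix.one_apply_eq]
  have hwv : w ⬝ᵥ v = 0 := by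
    have := coe_inv_mul g
    calc w ⬝ᵥ v = (M' * M) j i := by rw [Matrix.mul_apply]; rfl
    _ = 0 := by rw [this, Matrix.one_apply_ne hij.symm]
  apply mem_relE_of_coe_eq hn3 v (Finset.univ : Finset (Fin n × Fin n))
    (fun x => t * (u x.1 * w x.2)) (fun x => x.1) (fun x => x.2)
  · exact fun x _ => Ideal.mul_mem_right _ _ ht
  · rw [coe_conj_transv]
    have : (∑ x : Fin n × Fin n, Zv v (t * (u x.1 * w x.2)) x.1 x.2)
        = (fun k => t * M' j k) := by
      rw [sum_Zv_eq v u w t, huv, hwv]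
      funext k
      simp only [Pi.sub_apply, Pi.smul_apply, smul_eq_mul, mul_one, mul_zero, zero_mul,
        sub_zero]
      rfl
    rw [this]

theorem relE_normal (hn3 : 3 ≤ n) (𝔞 : Ideal R) : (relE n 𝔞).Normal := by
  constructor
  intro x hx g
  induction hx using Subgroup.closure_induction with
  | mem y hy =>
      obtain ⟨h, -, z, ⟨i, j, hij, t, ht, rfl⟩, rfl⟩ := hy
      have : g * (h * elemTransv i j hij t * h⁻¹) * g⁻¹
          = (g * h) * elemTransv i j hij t * (g * h)⁻¹ := by group
      rw [this]
      exact conj_transv_mem hn3 (g * h) i j hij ht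
  | one => simpa using Subgroup.one_mem (relE n 𝔞)
  | mul y z hy hz hy' hz' =>
      have : g * (y * z) * g⁻¹ = (g * y * g⁻¹) * (g * z * g⁻¹) := by group
      rw [this]
      exact Subgroup.mul_mem _ hy' hz'
  | inv y hy hy' =>
      have : g * y⁻¹ * g⁻¹ = (g * y * g⁻¹)⁻¹ := by group
      rw [this]
      exact Subgroup.inv_mem _ hy'

end Normality

section Congruence

variable {𝔞 : Ideal R}

theorem list_map_prod_single {G : Type*} [Group G] (g : Fin n → G) (p : Fin n)
    (hg : ∀ s, s ≠ p → g s = 1) :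
    ∀ l : List (Fin n), l.Nodup → (l.map g).prod = if p ∈ l then g p else 1 := by
  intro l
  induction l with
  | nil => simp
  | cons a l ih =>
      intro hnd
      have hnd' := List.nodup_cons.mp hnd
      rw [List.map_cons, List.prod_cons, ih hnd'.2]
      by_cases hap : a = p
      · subst hap
        rw [if_neg hnd'.1, mul_one, if_pos List.mem_cons_self]
      · rw [hg a hap, one_mul]
        by_cases hpl : p ∈ l
        · rw [if_pos hpl, if_pos (List.mem_cons_of_mem a hpl)]
        · rw [if_neg hpl, if_neg (by
            simp only [List.mem_cons]
            tauto)]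

theorem transv_mem_SLcong (i j : Fin n) (hij : i ≠ j) {a : R} (ha : a ∈ 𝔞) :
    elemTransv i j hij a ∈ SLcong n 𝔞 := by
  rw [SLcong, MonoidHom.mem_ker]
  apply Subtype.ext
  rw [redMap, Matrix.SpecialLinearGroup.map_apply_coe]
  show (Ideal.Quotient.mk 𝔞).mapMatrix (Matrix.transvection i j a) = _
  ext s t
  simp [Matrix.transvection, Matrix.single, Matrix.one_apply,
    Ideal.Quotient.eq_zero_iff_mem, ha]
  split_ifs <;>
    simp_all [Ideal.Quotient.eq_zero_iff_mem, ha]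

theorem SLcong_entries {h : SL n R} (hh : h ∈ SLcong n 𝔞) (s t : Fin n) :
    (h : Matrix (Fin n) (Fin n) R) s t - (1 : Matrix (Fin n) (Fin n) R) s t ∈ 𝔞 := by
  rw [SLcong, MonoidHom.mem_ker, redMap] at hh
  have hcoe := congrArg (fun g : SL n (R ⧸ 𝔞) => (g : Matrix (Fin n) (Fin n) (R ⧸ 𝔞)) s t) hh
  simp only [Matrix.SpecialLinearGroup.map_apply_coe, RingHom.mapMatrix_apply,
    Matrix.map_apply] at hcoe
  rw [← Ideal.Quotient.mk_eq_mk_iff_sub_mem]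
  rw [hcoe]
  show ((1 : SL n (R ⧸ 𝔞)) : Matrix (Fin n) (Fin n) (R ⧸ 𝔞)) s t = _
  rw [Matrix.SpecialLinearGroup.coe_one]
  by_cases hst : s = t
  · subst hst
    rw [Matrix.one_apply_eq, Matrix.one_apply_eq, _root_.map_one]
  · rw [Matrix.one_apply_ne hst, Matrix.one_apply_ne hst, map_zero]

theorem comm_Ccong_mem_SLcong {g : SL n R} (hg : g ∈ Ccong n 𝔞) (x : SL n R) :
    ⁅x, g⁆ ∈ SLcong n 𝔞 := by
  rw [SLcong, MonoidHom.mem_ker, map_commutatorElement]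
  exact commutatorElement_eq_one_iff_commute.mpr
    (Subgroup.mem_center_iff.mp hg (redMap n 𝔞 x))

end Congruence

section SubB

variable {𝔞 : Ideal R}

/-- The congruence version of the Suslin block computation : if `v ≡ e_p mod 𝔞`,
then the block `mkG v c p q` is congruent to `e_{pq}(c)` modulo `E(n,R,𝔞)`. -/
theorem mkG_mul_transv_inv_mem (hn3 : 3 ≤ n) {p q r : Fin n} (hrp : r ≠ p) (hrq : r ≠ q)
    (hpq : p ≠ q) (v : Fin n → R) (c : R) (hv : ∀ k, k ≠ p → v k ∈ 𝔞) (hvp : v p - 1 ∈ 𝔞) :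
    mkG v c hrp hrq * (elemTransv p q hpq c)⁻¹ ∈ relE n 𝔞 := by
  letI := relE_normal hn3 𝔞
  set φ : SL n R →* SL n R ⧸ relE n 𝔞 := QuotientGroup.mk' (relE n 𝔞) with hφ
  have hker : ∀ x : SL n R, x ∈ relE n 𝔞 → φ x = 1 := by
    intro x hx
    have hx2 : x ∈ MonoidHom.ker (QuotientGroup.mk' (relE n 𝔞)) := by
      rw [QuotientGroup.ker_mk']; exact hx
    exact MonoidHom.mem_ker.mp hx2
  suffices h : φ (mkG v c hrp hrq) = φ (elemTransv p q hpq c) by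
    have h1 : φ (mkG v c hrp hrq * (elemTransv p q hpq c)⁻¹) = 1 := by
      rw [_root_.map_mul, _root_.map_inv, h, mul_inv_cancel]
    have := (MonoidHom.mem_ker (f := φ)).mpr h1
    rwa [QuotientGroup.ker_mk'] at this
  -- the image of `A`
  have hA : φ (Aelt v r) = φ (elemTransv p r hrp.symm 1) := by
    rw [Aelt, MonoidHom.map_list_prod, List.map_map]
    have hval : ∀ s, s ≠ p →
        (φ ∘ fun s => if h : s = r then 1 else elemTransv s r h (v s)) s = 1 := by
      intro s hs
      by_cases hsr : s = r
      · simp [hsr]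
      · simp only [Function.comp_apply, dif_neg hsr]
        exact hker _ (transv_mem_relE s r hsr (hv s hs))
    rw [list_map_prod_single _ p hval (List.finRange n) (List.nodup_finRange n),
      if_pos (List.mem_finRange p)]
    simp only [Function.comp_apply, dif_neg hrp.symm]
    have : elemTransv p r hrp.symm (v p)
        = elemTransv p r hrp.symm 1 * elemTransv p r hrp.symm (v p - 1) := by
      rw [elemTransv_mul]
      congr 1
      ring
    rw [this, _root_.map_mul, hker _ (transv_mem_relE p r hrp.symm hvp), mul_one]
  -- the image of `B`
  have hB : φ (Belt v c hrp hrq) = φ (elemTransv r q hrq c) := by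
    rw [Belt, _root_.map_mul]
    have h1 : φ (elemTransv r p hrp (-(c * v q))) = 1 :=
      hker _ (transv_mem_relE r p hrp
        (Submodule.neg_mem _ (Ideal.mul_mem_left _ _ (hv q hpq.symm))))
    have h2 : elemTransv r q hrq (c * v p)
        = elemTransv r q hrq c * elemTransv r q hrq (c * v p - c) := by
      rw [elemTransv_mul]; congr 1; ring
    have h3 : c * v p - c ∈ 𝔞 := by
      have : c * v p - c = c * (v p - 1) := by ring
      rw [this]
      exact Ideal.mul_mem_left _ _ hvp
    rw [h1, one_mul, h2, _root_.map_mul, hker _ (transv_mem_relE r q hrq h3), mul_one]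
  -- the image of `T`
  have hT : φ (Tt v c hrp hrq) = 1 := by
    rw [Tt, _root_.map_mul]
    have hvr : v r ∈ 𝔞 := hv r hrp
    rw [hker _ (transv_mem_relE r p hrp (Submodule.neg_mem _
        (Ideal.mul_mem_left _ _ (Ideal.mul_mem_right _ _ hvr)))),
      hker _ (transv_mem_relE r q hrq
        (Ideal.mul_mem_left _ _ (Ideal.mul_mem_right _ _ hvr))), one_mul]
  rw [mkG, _root_.map_mul, _root_.map_mul, _root_.map_mul, _root_.map_mul, _root_.map_inv, _root_.map_inv, hA, hB, hT, mul_one]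
  have : φ (elemTransv p r hrp.symm (1 : R)) * φ (elemTransv r q hrq c)
        * (φ (elemTransv p r hrp.symm (1 : R)))⁻¹ * (φ (elemTransv r q hrq c))⁻¹
      = φ ⁅elemTransv p r hrp.symm (1 : R), elemTransv r q hrq c⁆ := by
    rw [commutatorElement_def, _root_.map_mul, _root_.map_mul, _root_.map_mul,
      _root_.map_inv, _root_.map_inv]
  rw [this, chevalley p r q hrp.symm hrq hpq (1 : R) c, one_mul]

end SubB

section MainCommutator

variable {𝔞 : Ideal R}

/-- `[h, e_{ij}(t)] ∈ E(n,R,𝔞)` for `h` in the principal congruence subgroup. -/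
theorem comm_SLcong_transv (hn3 : 3 ≤ n) {h : SL n R} (hh : h ∈ SLcong n 𝔞)
    (i j : Fin n) (hij : i ≠ j) (t : R) :
    ⁅h, elemTransv i j hij t⁆ ∈ relE n 𝔞 := by
  classical
  letI := relE_normal hn3 𝔞
  set φ : SL n R →* SL n R ⧸ relE n 𝔞 := QuotientGroup.mk' (relE n 𝔞) with hφ
  have hker : ∀ x : SL n R, x ∈ relE n 𝔞 → φ x = 1 := by
    intro x hx
    have hx2 : x ∈ MonoidHom.ker (QuotientGroup.mk' (relE n 𝔞)) := by
      rw [QuotientGroup.ker_mk']; exact hx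
    exact MonoidHom.mem_ker.mp hx2
  have hmem : ∀ x : SL n R, φ x = 1 → x ∈ relE n 𝔞 := by
    intro x hx
    have hx2 : x ∈ MonoidHom.ker (QuotientGroup.mk' (relE n 𝔞)) := MonoidHom.mem_ker.mpr hx
    rwa [QuotientGroup.ker_mk'] at hx2
  have hinv : h⁻¹ ∈ SLcong n 𝔞 := Subgroup.inv_mem _ hh
  set M : Matrix (Fin n) (Fin n) R := (h : Matrix (Fin n) (Fin n) R) with hM
  set M' : Matrix (Fin n) (Fin n) R := ((h⁻¹ : SL n R) : Matrix (Fin n) (Fin n) R) with hM'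
  set v : Fin n → R := fun k => M k i with hv
  set u : Fin n → R := fun k => M' i k with hu
  set w : Fin n → R := fun k => M' j k with hw
  have huv : u ⬝ᵥ v = 1 := by
    have hm := coe_inv_mul h
    calc u ⬝ᵥ v = (M' * M) i i := by rw [Matrix.mul_apply]; rfl
    _ = 1 := by rw [hm, Matrix.one_apply_eq]
  have hwv : w ⬝ᵥ v = 0 := by
    have hm := coe_inv_mul h
    calc w ⬝ᵥ v = (M' * M) j i := by rw [Matrix.mul_apply]; rfl
    _ = 0 := by rw [hm, Matrix.one_apply_ne hij.symm]
  have hvne : ∀ k, k ≠ i → v k ∈ 𝔞 := by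
    intro k hk
    have := SLcong_entries hh k i
    rwa [Matrix.one_apply_ne hk, sub_zero] at this
  have hvi : v i - 1 ∈ 𝔞 := by
    have := SLcong_entries hh i i
    rwa [Matrix.one_apply_eq] at this
  have hune : ∀ k, k ≠ i → u k ∈ 𝔞 := by
    intro k hk
    have := SLcong_entries hinv i k
    rwa [Matrix.one_apply_ne (Ne.symm hk), sub_zero] at this
  have hui : u i - 1 ∈ 𝔞 := by
    have := SLcong_entries hinv i i
    rwa [Matrix.one_apply_eq] at this
  have hwne : ∀ k, k ≠ j → w k ∈ 𝔞 := by
    intro k hk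
    have := SLcong_entries hinv j k
    rwa [Matrix.one_apply_ne (Ne.symm hk), sub_zero] at this
  have hwj : w j - 1 ∈ 𝔞 := by
    have := SLcong_entries hinv j j
    rwa [Matrix.one_apply_eq] at this
  obtain ⟨r, hri, hrj⟩ := exists_third hn3 i j
  set cf : Fin n × Fin n → R := fun x => t * (u x.1 * w x.2) with hcf
  have hcfmem : ∀ x : Fin n × Fin n, x ≠ (i, j) → cf x ∈ 𝔞 := by
    intro x hx
    rcases em (x.1 = i) with h1 | h1
    · have h2 : x.2 ≠ j := by
        intro h2
        exact hx (Prod.ext h1 h2)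
      exact Ideal.mul_mem_left _ _ (Ideal.mul_mem_left _ _ (hwne x.2 h2))
    · exact Ideal.mul_mem_left _ _ (Ideal.mul_mem_right _ _ (hune x.1 h1))
  set T : SL n R := h * elemTransv i j hij t * h⁻¹ with hT
  have hTcoe : (T : Matrix (Fin n) (Fin n) R)
      = 1 + vecMulVec v (∑ x : Fin n × Fin n, Zv v (cf x) x.1 x.2) := by
    rw [hT, coe_conj_transv]
    have : (∑ x : Fin n × Fin n, Zv v (cf x) x.1 x.2) = fun k => t * M' j k := by
      rw [hcf, sum_Zv_eq v u w t, huv, hwv]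
      funext k
      simp only [Pi.sub_apply, Pi.smul_apply, smul_eq_mul, mul_one, mul_zero, zero_mul,
        sub_zero]
      rfl
    rw [this]
  have hstep : T = (T * mkG v (-(cf (i, j))) hri hrj) * mkG v (cf (i, j)) hri hrj := by
    rw [mul_assoc]
    have hone : mkG v (-(cf (i, j))) hri hrj * mkG v (cf (i, j)) hri hrj = 1 := by
      have := mkG_mul_neg v (-(cf (i, j))) hri hrj
      rwa [neg_neg] at this
    rw [hone, mul_one]
  have hT'mem : T * mkG v (-(cf (i, j))) hri hrj ∈ relE n 𝔞 := by
    apply mem_relE_of_coe_eq hn3 v ((Finset.univ : Finset (Fin n × Fin n)).erase (i, j))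
      cf (fun x => x.1) (fun x => x.2)
    · exact fun x hx => hcfmem x (Finset.ne_of_mem_erase hx)
    · rw [Matrix.SpecialLinearGroup.coe_mul, hTcoe, coe_mkG, Zv_neg, vmv_neg_right]
      have hsum : (∑ x : Fin n × Fin n, Zv v (cf x) x.1 x.2)
          = Zv v (cf (i, j)) i j
            + ∑ x ∈ (Finset.univ : Finset (Fin n × Fin n)).erase (i, j),
                Zv v (cf x) x.1 x.2 := by
        rw [← Finset.add_sum_erase _ (fun x : Fin n × Fin n => Zv v (cf x) x.1 x.2)
          (Finset.mem_univ (i, j))]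
      rw [hsum]
      have hZa : Zv v (cf (i, j)) i j ⬝ᵥ v = 0 := Zv_dot v _ _ _
      have hsum0 : (∑ x ∈ (Finset.univ : Finset (Fin n × Fin n)).erase (i, j),
          Zv v (cf x) x.1 x.2) ⬝ᵥ v = 0 :=
        sum_dot_zero _ _ v fun x _ => Zv_dot v (cf x) _ _
      simp only [mul_add, add_mul, one_mul, mul_one, mul_neg, neg_mul, vmv_mul_vmv, hZa,
        hsum0, add_dotProduct, zero_smul, smul_zero, neg_zero, add_zero, zero_add,
        vmv_add_right]
      abel
  have hpiece : φ (mkG v (cf (i, j)) hri hrj) = φ (elemTransv i j hij (cf (i, j))) := by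
    have := mkG_mul_transv_inv_mem hn3 hri hrj hij v (cf (i, j)) hvne hvi
    have h1 := hker _ this
    rw [_root_.map_mul, _root_.map_inv] at h1
    exact mul_inv_eq_one.mp h1
  have hcij : cf (i, j) - t ∈ 𝔞 := by
    have : cf (i, j) - t = t * ((u i - 1) * w j) + t * (w j - 1) := by
      rw [hcf]; ring
    rw [this]
    exact Submodule.add_mem _ (Ideal.mul_mem_left _ _ (Ideal.mul_mem_right _ _ hui))
      (Ideal.mul_mem_left _ _ hwj)
  apply hmem
  have hcomm : ⁅h, elemTransv i j hij t⁆ = T * (elemTransv i j hij t)⁻¹ := by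
    rw [commutatorElement_def, hT]
  rw [hcomm, _root_.map_mul, _root_.map_inv]
  rw [hstep, _root_.map_mul, hker _ hT'mem, one_mul, hpiece]
  have : φ (elemTransv i j hij (cf (i, j))) * (φ (elemTransv i j hij t))⁻¹
      = φ (elemTransv i j hij (cf (i, j)) * (elemTransv i j hij t)⁻¹) := by
    rw [_root_.map_mul, _root_.map_inv]
  rw [this, elemTransv_inv, elemTransv_mul]
  exact hker _ (transv_mem_relE i j hij (by simpa [sub_eq_add_neg] using hcij))

end MainCommutator

section Extension

variable {𝔞 : Ideal R}

theorem comm_Esub_SLcong (hn3 : 3 ≤ n) {x h : SL n R} (hx : x ∈ Esub n (Set.univ : Set R))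
    (hh : h ∈ SLcong n 𝔞) : ⁅x, h⁆ ∈ relE n 𝔞 := by
  letI := relE_normal hn3 𝔞
  set φ : SL n R →* SL n R ⧸ relE n 𝔞 := QuotientGroup.mk' (relE n 𝔞) with hφ
  have hker : ∀ y : SL n R, y ∈ relE n 𝔞 → φ y = 1 := by
    intro y hy
    have hy2 : y ∈ MonoidHom.ker (QuotientGroup.mk' (relE n 𝔞)) := by
      rw [QuotientGroup.ker_mk']; exact hy
    exact MonoidHom.mem_ker.mp hy2
  have hmem : ∀ y : SL n R, φ y = 1 → y ∈ relE n 𝔞 := by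
    intro y hy
    have hy2 : y ∈ MonoidHom.ker (QuotientGroup.mk' (relE n 𝔞)) := MonoidHom.mem_ker.mpr hy
    rwa [QuotientGroup.ker_mk'] at hy2
  have hle : Esub n (Set.univ : Set R) ≤ (Subgroup.centralizer {φ h}).comap φ := by
    rw [Esub]
    apply (Subgroup.closure_le _).mpr
    rintro y ⟨i, j, hij, a, -, rfl⟩
    show φ (elemTransv i j hij a) ∈ Subgroup.centralizer {φ h}
    rw [Subgroup.mem_centralizer_iff]
    rintro m hm
    rw [Set.mem_singleton_iff] at hm
    subst hm
    have h1 := hker _ (comm_SLcong_transv hn3 hh i j hij a)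
    rw [map_commutatorElement] at h1
    exact commutatorElement_eq_one_iff_commute.mp h1
  have hx' := hle hx
  rw [Subgroup.mem_comap, Subgroup.mem_centralizer_iff] at hx'
  have hcomm := hx' (φ h) (Set.mem_singleton _)
  apply hmem
  rw [map_commutatorElement]
  exact commutatorElement_eq_one_iff_commute.mpr hcomm.symm

theorem comm_transv_Ccong (hn3 : 3 ≤ n) {g : SL n R} (hg : g ∈ Ccong n 𝔞)
    (i j : Fin n) (hij : i ≠ j) (t : R) :
    ⁅elemTransv i j hij t, g⁆ ∈ relE n 𝔞 := by
  letI hN := relE_normal hn3 𝔞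
  obtain ⟨k, hki, hkj⟩ := exists_third hn3 i j
  set p : SL n R := elemTransv i k (Ne.symm hki) t with hp
  set q : SL n R := elemTransv k j hkj (1 : R) with hq
  have hpq : ⁅p, q⁆ = elemTransv i j hij t := by
    rw [hp, hq, chevalley i k j (Ne.symm hki) hkj hij t 1, mul_one]
  have HW : (p⁻¹ * ⁅⁅p, q⁆, g⁆ * p) * ((g * ⁅⁅g⁻¹, p⁻¹⁆, q⁆ * g⁻¹)
      * (q * ⁅⁅q⁻¹, g⁆, p⁻¹⁆ * q⁻¹)) = 1 := by
    simp only [commutatorElement_def]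
    group
  have hY : ⁅⁅g⁻¹, p⁻¹⁆, q⁆ ∈ relE n 𝔞 := by
    have h2 : ⁅g⁻¹, p⁻¹⁆ ∈ SLcong n 𝔞 := by
      rw [← commutatorElement_inv]
      exact Subgroup.inv_mem _ (comm_Ccong_mem_SLcong (Subgroup.inv_mem _ hg) p⁻¹)
    rw [← commutatorElement_inv]
    exact Subgroup.inv_mem _ (comm_Esub_SLcong hn3 (transv_mem_Esub k j hkj 1) h2)
  have hZ : ⁅⁅q⁻¹, g⁆, p⁻¹⁆ ∈ relE n 𝔞 := by
    have h1 : ⁅q⁻¹, g⁆ ∈ SLcong n 𝔞 := comm_Ccong_mem_SLcong hg q⁻¹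
    rw [← commutatorElement_inv]
    exact Subgroup.inv_mem _
      (comm_Esub_SLcong hn3 (Subgroup.inv_mem _ (transv_mem_Esub i k (Ne.symm hki) t)) h1)
  have hmain : ⁅⁅p, q⁆, g⁆
      = p * ((g * ⁅⁅g⁻¹, p⁻¹⁆, q⁆ * g⁻¹) * (q * ⁅⁅q⁻¹, g⁆, p⁻¹⁆ * q⁻¹))⁻¹ * p⁻¹ := by
    have h' := eq_inv_of_mul_eq_one_left HW
    have : ⁅⁅p, q⁆, g⁆ = p * (p⁻¹ * ⁅⁅p, q⁆, g⁆ * p) * p⁻¹ := by group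
    rw [this, h']
  rw [← hpq]
  rw [hmain]
  have hin : ((g * ⁅⁅g⁻¹, p⁻¹⁆, q⁆ * g⁻¹) * (q * ⁅⁅q⁻¹, g⁆, p⁻¹⁆ * q⁻¹))⁻¹ ∈ relE n 𝔞 :=
    Subgroup.inv_mem _ (Subgroup.mul_mem _ (hN.conj_mem _ hY g) (hN.conj_mem _ hZ q))
  have := hN.conj_mem _ hin p
  simpa [mul_assoc] using this

theorem comm_Esub_Ccong (hn3 : 3 ≤ n) {x g : SL n R} (hx : x ∈ Esub n (Set.univ : Set R))
    (hg : g ∈ Ccong n 𝔞) : ⁅x, g⁆ ∈ relE n 𝔞 := by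
  letI := relE_normal hn3 𝔞
  set φ : SL n R →* SL n R ⧸ relE n 𝔞 := QuotientGroup.mk' (relE n 𝔞) with hφ
  have hker : ∀ y : SL n R, y ∈ relE n 𝔞 → φ y = 1 := by
    intro y hy
    have hy2 : y ∈ MonoidHom.ker (QuotientGroup.mk' (relE n 𝔞)) := by
      rw [QuotientGroup.ker_mk']; exact hy
    exact MonoidHom.mem_ker.mp hy2
  have hmem : ∀ y : SL n R, φ y = 1 → y ∈ relE n 𝔞 := by
    intro y hy
    have hy2 : y ∈ MonoidHom.ker (QuotientGroup.mk' (relE n 𝔞)) := MonoidHom.mem_ker.mpr hy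
    rwa [QuotientGroup.ker_mk'] at hy2
  have hle : Esub n (Set.univ : Set R) ≤ (Subgroup.centralizer {φ g}).comap φ := by
    rw [Esub]
    apply (Subgroup.closure_le _).mpr
    rintro y ⟨i, j, hij, a, -, rfl⟩
    show φ (elemTransv i j hij a) ∈ Subgroup.centralizer {φ g}
    rw [Subgroup.mem_centralizer_iff]
    rintro m hm
    rw [Set.mem_singleton_iff] at hm
    subst hm
    have h1 := hker _ (comm_transv_Ccong hn3 hg i j hij a)
    rw [map_commutatorElement] at h1
    exact (commutatorElement_eq_one_iff_commute.mp h1).symm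
  have hx' := hle hx
  rw [Subgroup.mem_comap, Subgroup.mem_centralizer_iff] at hx'
  have hcomm := hx' (φ g) (Set.mem_singleton _)
  apply hmem
  rw [map_commutatorElement]
  exact commutatorElement_eq_one_iff_commute.mpr hcomm.symm

theorem SLcong_le_Ccong : SLcong n 𝔞 ≤ Ccong n 𝔞 := by
  intro x hx
  rw [SLcong, MonoidHom.mem_ker] at hx
  show redMap n 𝔞 x ∈ Subgroup.center _
  rw [hx]
  exact Subgroup.one_mem _

end Extension

end ACF

/-- The absolute standard commutator formulae: for `n ≥ 3` and an ideal `𝔞 ⊴ R`,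
`⁅SL(n,R), E(n,R,𝔞)⁆ = E(n,R,𝔞)` and `⁅E(n,R), C(n,R,𝔞)⁆ = E(n,R,𝔞)`. -/
theorem absolute_standard_commutator_formulae
    {R : Type*} [CommRing R] (n : ℕ) (hn : 3 ≤ n) (a : Ideal R) :
    ⁅(⊤ : Subgroup (SL n R)), relE n a⁆ = relE n a ∧
      ⁅Esub n (Set.univ : Set R), Ccong n a⁆ = relE n a := by
  letI hN := ACF.relE_normal hn a
  constructor
  · apply le_antisymm
    · rw [Subgroup.commutator_le]
      intro g _ x hx
      have : ⁅g, x⁆ = (g * x * g⁻¹) * x⁻¹ := by group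
      rw [this]
      exact Subgroup.mul_mem _ (hN.conj_mem _ hx g) (Subgroup.inv_mem _ hx)
    · rw [relE, relESet]
      apply (Subgroup.closure_le _).mpr
      rintro _ ⟨g, hg, y, ⟨i, j, hij, t, ht, rfl⟩, rfl⟩
      obtain ⟨k, hki, hkj⟩ := ACF.exists_third hn i j
      have hy : elemTransv i j hij t ∈ ⁅(⊤ : Subgroup (SL n R)), relE n a⁆ := by
        have hch := ACF.chevalley i k j (Ne.symm hki) hkj hij t 1
        rw [mul_one] at hch
        rw [← hch, ← commutatorElement_inv]
        exact Subgroup.inv_mem _ (Subgroup.commutator_mem_commutator (Subgroup.mem_top _)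
          (ACF.transv_mem_relE i k (Ne.symm hki) ht))
      have hgy : g * elemTransv i j hij t * g⁻¹
          = ⁅g, elemTransv i j hij t⁆ * elemTransv i j hij t := by group
      rw [hgy]
      exact Subgroup.mul_mem _
        (Subgroup.commutator_mem_commutator (Subgroup.mem_top _)
          (ACF.transv_mem_relE i j hij ht)) hy
  · apply le_antisymm
    · rw [Subgroup.commutator_le]
      intro x hx g hg
      exact ACF.comm_Esub_Ccong hn hx hg
    · rw [relE, relESet]
      apply (Subgroup.closure_le _).mpr
      rintro _ ⟨g, hg, y, ⟨i, j, hij, t, ht, rfl⟩, rfl⟩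
      obtain ⟨k, hki, hkj⟩ := ACF.exists_third hn i j
      have hyC : elemTransv i j hij t ∈ Ccong n a :=
        ACF.SLcong_le_Ccong (ACF.transv_mem_SLcong i j hij ht)
      have hy : elemTransv i j hij t ∈ ⁅Esub n (Set.univ : Set R), Ccong n a⁆ := by
        have hch := ACF.chevalley i k j (Ne.symm hki) hkj hij t 1
        rw [mul_one] at hch
        rw [← hch, ← commutatorElement_inv]
        refine Subgroup.inv_mem _ (Subgroup.commutator_mem_commutator
          (ACF.transv_mem_Esub k j hkj 1)
          (ACF.SLcong_le_Ccong (ACF.transv_mem_SLcong i k (Ne.symm hki) ht)))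
      have hgy : g * elemTransv i j hij t * g⁻¹
          = ⁅g, elemTransv i j hij t⁆ * elemTransv i j hij t := by group
      rw [hgy]
      exact Subgroup.mul_mem _ (Subgroup.commutator_mem_commutator hg hyC) hy
end

section
/- Let R be a commutative ring, n ≥ 3 a natural number, and s, t ∈ R. For all natural numbers p, q, k there exist natural numbers h and m, depending only on n, k, p, q and not on the ideal 𝔞, such that for every ideal 𝔞 of R, every pair of indices i ≠ j, every r ∈ R, and every y ∈ E(n, s^h t^m 𝔞), the conjugate e_{ij}(F(r)·F(s)^{−k}) · y · e_{ij}(F(r)·F(s)^{−k})⁻¹ lies in E(n, s^p t^q R, s^p t^q 𝔞), all inside SL(n, R_{st}). (Type A_{n−1} instance of the paper's key relative conjugation calculus lemma with two denominators.) -/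
open Matrix

/-- `s^p t^q 𝔞 = {F(s^p·t^q·c) : c ∈ S} ⊆ R_{st}`, where
`F : R → R_{st} = Localization.Away (s·t)` is the canonical map. -/
def stMulSet {R : Type*} [CommRing R] (s t : R) (p q : ℕ) (S : Set R) :
    Set (Localization.Away (s * t)) :=
  { x | ∃ c ∈ S, x = algebraMap R (Localization.Away (s * t)) (s ^ p * t ^ q * c) }

section Aux

open Matrix

variable {n : ℕ} {R : Type*} [CommRing R]

lemma stdBasisMatrix_neg' (i j : Fin n) (a : R) :
    single i j (-a) = -single i j a := by
  have := Matrix.smul_single (-1 : R) i j a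
  simpa [neg_one_smul] using this.symm

lemma tv_comm (i j u v : Fin n) (hju : j ≠ u) (hvi : v ≠ i) (x w : R) :
    transvection i j x * transvection u v w = transvection u v w * transvection i j x := by
  simp only [transvection, Matrix.add_mul, Matrix.mul_add, Matrix.one_mul, Matrix.mul_one,
    Matrix.zero_mul, Matrix.mul_zero, smul_zero, add_zero, zero_add,
    Matrix.single_mul_single_of_ne _ _ _ _ (hju), Matrix.single_mul_single_of_ne _ _ _ _ (hvi)]
  abel

lemma tv_case_b (i j v : Fin n) (hvi : v ≠ i) (x w : R) :
    transvection i j x * transvection j v w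
      = transvection j v w * transvection i v (x * w) * transvection i j x := by
  simp only [transvection, Matrix.add_mul, Matrix.mul_add, Matrix.one_mul, Matrix.mul_one,
    Matrix.zero_mul, Matrix.mul_zero, smul_zero, add_zero, zero_add,
    Matrix.single_mul_single_same, Matrix.single_mul_single_of_ne _ _ _ _ (hvi)]
  abel

lemma tv_case_c (i j u : Fin n) (hju : j ≠ u) (hiu : i ≠ u) (hji : j ≠ i) (x w : R) :
    transvection i j x * transvection u i w
      = transvection u i w * transvection u j (-(w * x)) * transvection i j x := by
  simp only [transvection, Matrix.add_mul, Matrix.mul_add, Matrix.one_mul, Matrix.mul_one,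
    Matrix.zero_mul, Matrix.mul_zero, smul_zero, add_zero, zero_add,
    Matrix.single_mul_single_same, stdBasisMatrix_neg', Matrix.mul_neg, Matrix.neg_mul,
    Matrix.single_mul_single_of_ne _ _ _ _ (hju), Matrix.single_mul_single_of_ne _ _ _ _ (hiu),
    Matrix.single_mul_single_of_ne _ _ _ _ (hji)]
  abel

lemma tv_decomp (i j l : Fin n) (hji : j ≠ i) (hjl : j ≠ l) (hli : l ≠ i) (hlj : l ≠ j)
    (hil : i ≠ l) (b c : R) :
    transvection j l b * transvection l i c * transvection j l (-b) * transvection l i (-c)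
      = transvection j i (b * c) := by
  simp only [transvection, Matrix.add_mul, Matrix.mul_add, Matrix.one_mul, Matrix.mul_one,
    Matrix.zero_mul, Matrix.mul_zero, smul_zero, add_zero, zero_add,
    Matrix.single_mul_single_same, stdBasisMatrix_neg', Matrix.mul_neg, Matrix.neg_mul,
    neg_mul, mul_neg, neg_neg,
    Matrix.single_mul_single_of_ne _ _ _ _ (hji), Matrix.single_mul_single_of_ne _ _ _ _ (hjl),
    Matrix.single_mul_single_of_ne _ _ _ _ (hli), Matrix.single_mul_single_of_ne _ _ _ _ (hlj),
    Matrix.single_mul_single_of_ne _ _ _ _ (hil), Matrix.single_mul_single_of_ne _ _ _ _ (hji.symm)]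
  abel

end Aux

section SLAux

open Matrix

variable {n : ℕ} {R : Type*} [CommRing R]

lemma elemTransv_mul_same (i j : Fin n) (hij : i ≠ j) (a b : R) :
    elemTransv i j hij a * elemTransv i j hij b = elemTransv i j hij (a + b) :=
  Subtype.ext (by
    simp only [Matrix.SpecialLinearGroup.coe_mul]
    simp [elemTransv, Matrix.SpecialLinearGroup.coe_mul,
      Matrix.transvection_mul_transvection_same _ _ hij])

lemma elemTransv_inv (i j : Fin n) (hij : i ≠ j) (a : R) :
    (elemTransv i j hij a)⁻¹ = elemTransv i j hij (-a) := by
  refine inv_eq_of_mul_eq_one_right ?_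
  rw [elemTransv_mul_same, add_neg_cancel]
  exact Subtype.ext (by simp [elemTransv])

lemma SLconj_a (i j u v : Fin n) (hij : i ≠ j) (huv : u ≠ v) (hju : j ≠ u) (hvi : v ≠ i)
    (x w : R) :
    elemTransv i j hij x * elemTransv u v huv w * (elemTransv i j hij x)⁻¹
      = elemTransv u v huv w := by
  have h1 : elemTransv i j hij x * elemTransv u v huv w
      = elemTransv u v huv w * elemTransv i j hij x :=
    Subtype.ext (by simp only [Matrix.SpecialLinearGroup.coe_mul]; simpa [elemTransv, Matrix.SpecialLinearGroup.coe_mul] using tv_comm i j u v hju hvi x w)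
  rw [h1, mul_inv_cancel_right]

lemma SLconj_b (i j v : Fin n) (hij : i ≠ j) (hjv : j ≠ v) (hiv : i ≠ v) (x w : R) :
    elemTransv i j hij x * elemTransv j v hjv w * (elemTransv i j hij x)⁻¹
      = elemTransv j v hjv w * elemTransv i v hiv (x * w) := by
  have h1 : elemTransv i j hij x * elemTransv j v hjv w
      = elemTransv j v hjv w * elemTransv i v hiv (x * w) * elemTransv i j hij x :=
    Subtype.ext (by simp only [Matrix.SpecialLinearGroup.coe_mul]; simpa [elemTransv, Matrix.SpecialLinearGroup.coe_mul] using tv_case_b i j v (Ne.symm hiv) x w)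
  rw [h1, mul_inv_cancel_right]

lemma SLconj_c (i j u : Fin n) (hij : i ≠ j) (hui : u ≠ i) (huj : u ≠ j) (x w : R) :
    elemTransv i j hij x * elemTransv u i hui w * (elemTransv i j hij x)⁻¹
      = elemTransv u i hui w * elemTransv u j huj (-(w * x)) := by
  have h1 : elemTransv i j hij x * elemTransv u i hui w
      = elemTransv u i hui w * elemTransv u j huj (-(w * x)) * elemTransv i j hij x :=
    Subtype.ext (by simp only [Matrix.SpecialLinearGroup.coe_mul]; simpa [elemTransv, Matrix.SpecialLinearGroup.coe_mul] using tv_case_c i j u (Ne.symm huj) (Ne.symm hui) (Ne.symm hij) x w)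
  rw [h1, mul_inv_cancel_right]

lemma SLdecomp (i j l : Fin n) (hji : j ≠ i) (hjl : j ≠ l) (hli : l ≠ i) (b c : R) :
    elemTransv j i hji (b * c)
      = elemTransv j l hjl b * elemTransv l i hli c
          * (elemTransv j l hjl b)⁻¹ * (elemTransv l i hli c)⁻¹ := by
  rw [elemTransv_inv, elemTransv_inv]
  exact Subtype.ext (by simp only [Matrix.SpecialLinearGroup.coe_mul]; simpa [elemTransv, Matrix.SpecialLinearGroup.coe_mul] using (tv_decomp i j l hji hjl hli (Ne.symm hjl) (Ne.symm hli) b c).symm)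

lemma transv_mem_relESet {T S : Set R} {y : SL n R} (hy : y ∈ transvSet n S) :
    y ∈ relESet n T S :=
  Subgroup.subset_closure ⟨1, one_mem _, y, hy, by group⟩

lemma elemTransv_mem_Esub {S : Set R} (i j : Fin n) (hij : i ≠ j) {a : R} (ha : a ∈ S) :
    elemTransv i j hij a ∈ Esub n S :=
  Subgroup.subset_closure ⟨i, j, hij, a, ha, rfl⟩

lemma conj_mem_relESet {T S : Set R} {g : SL n R} (hg : g ∈ Esub n T) {z : SL n R}
    (hz : z ∈ relESet n T S) : g * z * g⁻¹ ∈ relESet n T S := by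
  induction hz using Subgroup.closure_induction with
  | mem x hx =>
    obtain ⟨g', hg', y, hy, rfl⟩ := hx
    refine Subgroup.subset_closure ⟨g * g', mul_mem hg hg', y, hy, by group⟩
  | one => simpa using one_mem _
  | mul x y hx hy ihx ihy =>
    have : g * (x * y) * g⁻¹ = (g * x * g⁻¹) * (g * y * g⁻¹) := by group
    rw [this]; exact mul_mem ihx ihy
  | inv x hx ih =>
    have : g * x⁻¹ * g⁻¹ = (g * x * g⁻¹)⁻¹ := by group
    rw [this]; exact inv_mem ih

lemma mk_mul_F (s t r w0 w1 : R) (k : ℕ) (hw : r * t ^ k * w0 = (s * t) ^ k * w1) :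
    (Localization.mk (r * t ^ k) (⟨(s * t) ^ k, k, rfl⟩ : Submonoid.powers (s * t))
        : Localization.Away (s * t))
      * algebraMap R (Localization.Away (s * t)) w0
      = algebraMap R (Localization.Away (s * t)) w1 := by
  rw [← Localization.mk_one_eq_algebraMap, ← Localization.mk_one_eq_algebraMap,
    Localization.mk_mul, Localization.mk_eq_mk_iff, Localization.r_iff_exists]
  refine ⟨1, ?_⟩
  simp only [OneMemClass.coe_one, one_mul, Submonoid.coe_mul, Submonoid.mk_mul_mk, mul_one]
  linear_combination hw

end SLAux

/-- The relative conjugation calculus lemma (type `A_{n-1}`): given `p, q, k`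
there exist `h, m` (independent of the ideal `𝔞`) such that for every ideal
`𝔞 ⊴ R`, conjugation by any `e_{ij}(F(r)·F(s)^{-k})` carries `E(n, s^h t^m 𝔞)`
into `E(n, s^p t^q R, s^p t^q 𝔞)` inside `SL(n, R_{st})`.
Here `F(r)·F(s)^{-k}` is the element `Localization.mk (r·t^k) ⟨(s·t)^k, _⟩`. -/
theorem exists_conjugation_calculus
    {R : Type*} [CommRing R] (n : ℕ) (hn : 3 ≤ n) (s t : R) (p q k : ℕ) :
    ∃ h m : ℕ, ∀ a : Ideal R, ∀ i j : Fin n, ∀ hij : i ≠ j, ∀ r : R,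
      ∀ y ∈ Esub n (stMulSet s t h m (a : Set R)),
        elemTransv i j hij (Localization.mk (r * t ^ k) (⟨(s * t) ^ k, k, rfl⟩ : Submonoid.powers (s * t))) * y *
            (elemTransv i j hij (Localization.mk (r * t ^ k) (⟨(s * t) ^ k, k, rfl⟩ : Submonoid.powers (s * t))))⁻¹ ∈
          relESet n (stMulSet s t p q (Set.univ : Set R))
            (stMulSet s t p q (a : Set R)) := by
  classical
  refine ⟨2 * p + 2 * k, 2 * q, ?_⟩
  intro a i j hij r y hy
  have hy' : y ∈ Subgroup.closure
      (transvSet n (stMulSet s t (2 * p + 2 * k) (2 * q) (a : Set R))) := hy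
  clear hy
  set L := Localization.Away (s * t) with hL
  set x : L := Localization.mk (r * t ^ k)
    (⟨(s * t) ^ k, k, rfl⟩ : Submonoid.powers (s * t)) with hxdef
  set g : SL n L := elemTransv i j hij x with hgdef
  induction hy' using Subgroup.closure_induction with
  | mem z hz =>
    obtain ⟨u, v, huv, w, hwmem, rfl⟩ := hz
    obtain ⟨a0, ha0, rfl⟩ := hwmem
    have e1 : algebraMap R L (s ^ (2 * p + 2 * k) * t ^ (2 * q) * a0)
        = algebraMap R L (s ^ p * t ^ q * (s ^ (p + 2 * k) * t ^ q * a0)) := by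
      rw [show s ^ (2 * p + 2 * k) * t ^ (2 * q) * a0
        = s ^ p * t ^ q * (s ^ (p + 2 * k) * t ^ q * a0) from by ring]
    have hwS : algebraMap R L (s ^ (2 * p + 2 * k) * t ^ (2 * q) * a0)
        ∈ stMulSet s t p q (a : Set R) :=
      ⟨s ^ (p + 2 * k) * t ^ q * a0, Ideal.mul_mem_left a _ ha0, e1⟩
    have e2 : x * algebraMap R L (s ^ (2 * p + 2 * k) * t ^ (2 * q) * a0)
        = algebraMap R L (s ^ p * t ^ q * (s ^ (p + k) * t ^ q * (r * a0))) :=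
      mk_mul_F s t r _ _ k (by ring)
    by_cases hu : u = j
    · have hu' : j = u := hu.symm
      subst hu'
      by_cases hv : v = i
      · -- the hard case : (u,v) = (j,i)
        have hv' : i = v := hv.symm
        subst hv'
        -- pick a third index l
        have hl : ∃ l : Fin n, l ≠ i ∧ l ≠ j := by
          by_contra hcon
          push_neg at hcon
          have hsub : (Finset.univ : Finset (Fin n)) ⊆ {i, j} := by
            intro l _
            rcases eq_or_ne l i with h | h
            · simp [h]
            · simp [hcon l h]
          have hcard := Finset.card_le_card hsub
          have h2 : (({i, j} : Finset (Fin n)).card) ≤ 2 :=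
            (Finset.card_insert_le i {j}).trans (by simp)
          rw [Finset.card_univ, Fintype.card_fin] at hcard
          exact absurd (le_trans hcard h2) (by omega)
        obtain ⟨l, hli, hlj⟩ := hl
        have hjl : j ≠ l := Ne.symm hlj
        have hil : i ≠ l := Ne.symm hli
        set bb : L := algebraMap R L (s ^ p * t ^ q * (s ^ k * a0)) with hbb
        set cc : L := algebraMap R L (s ^ p * t ^ q * s ^ k) with hcc
        have hw : algebraMap R L (s ^ (2 * p + 2 * k) * t ^ (2 * q) * a0) = bb * cc := by
          rw [hbb, hcc, ← _root_.map_mul]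
          rw [show s ^ p * t ^ q * (s ^ k * a0) * (s ^ p * t ^ q * s ^ k)
            = s ^ (2 * p + 2 * k) * t ^ (2 * q) * a0 from by ring]
        have hdecomp : elemTransv j i huv
              (algebraMap R L (s ^ (2 * p + 2 * k) * t ^ (2 * q) * a0))
            = elemTransv j l hjl bb * elemTransv l i hli cc
              * (elemTransv j l hjl bb)⁻¹ * (elemTransv l i hli cc)⁻¹ := by
          rw [hw]; exact SLdecomp i j l huv hjl hli bb cc
        have hZA : g * elemTransv j l hjl bb * g⁻¹
            = elemTransv j l hjl bb * elemTransv i l hil (x * bb) :=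
          SLconj_b i j l hij hjl hil x bb
        have hZB : g * elemTransv l i hli cc * g⁻¹
            = elemTransv l i hli cc * elemTransv l j hlj (-(cc * x)) :=
          SLconj_c i j l hij hli hlj x cc
        have e4 : x * bb = algebraMap R L (s ^ p * t ^ q * (r * a0)) :=
          mk_mul_F s t r _ _ k (by ring)
        have e5' : x * cc = algebraMap R L (s ^ p * t ^ q * r) :=
          mk_mul_F s t r _ _ k (by ring)
        have e5 : -(cc * x) = algebraMap R L (s ^ p * t ^ q * (-r)) := by
          rw [mul_comm cc x, e5', ← _root_.map_neg]
          rw [show -(s ^ p * t ^ q * r) = s ^ p * t ^ q * (-r) from by ring]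
        have hZAmem : elemTransv j l hjl bb * elemTransv i l hil (x * bb)
            ∈ relESet n (stMulSet s t p q (Set.univ : Set R)) (stMulSet s t p q (a : Set R)) := by
          refine mul_mem (transv_mem_relESet ⟨j, l, hjl, bb, ?_, rfl⟩)
            (transv_mem_relESet ⟨i, l, hil, x * bb, ?_, rfl⟩)
          · exact ⟨s ^ k * a0, Ideal.mul_mem_left a _ ha0, hbb⟩
          · exact ⟨r * a0, Ideal.mul_mem_left a _ ha0, e4⟩
        have hZBmem : elemTransv l i hli cc * elemTransv l j hlj (-(cc * x))
            ∈ Esub n (stMulSet s t p q (Set.univ : Set R)) :=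
          mul_mem (elemTransv_mem_Esub l i hli ⟨s ^ k, trivial, hcc⟩)
            (elemTransv_mem_Esub l j hlj ⟨-r, trivial, e5⟩)
        have main_eq : g * elemTransv j i huv
              (algebraMap R L (s ^ (2 * p + 2 * k) * t ^ (2 * q) * a0)) * g⁻¹
            = (g * elemTransv j l hjl bb * g⁻¹)
              * ((g * elemTransv l i hli cc * g⁻¹)
                * (g * elemTransv j l hjl bb * g⁻¹)⁻¹
                * (g * elemTransv l i hli cc * g⁻¹)⁻¹) := by
          rw [hdecomp]; group
        rw [main_eq, hZA, hZB]
        exact mul_mem hZAmem (conj_mem_relESet hZBmem (inv_mem hZAmem))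
      · -- case b : u = j, v ≠ i
        have hiv : i ≠ v := fun h => hv h.symm
        rw [hgdef, SLconj_b i j v hij huv hiv x _]
        exact mul_mem (transv_mem_relESet ⟨j, v, huv, _, hwS, rfl⟩)
          (transv_mem_relESet ⟨i, v, hiv, _, ⟨s ^ (p + k) * t ^ q * (r * a0),
            Ideal.mul_mem_left a _ (Ideal.mul_mem_left a _ ha0), e2⟩, rfl⟩)
    · by_cases hv : v = i
      · -- case c : v = i, u ≠ j
        have hv' : i = v := hv.symm
        subst hv'
        have huj : u ≠ j := hu
        rw [hgdef, SLconj_c i j u hij huv huj x _]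
        have e3 : -(algebraMap R L (s ^ (2 * p + 2 * k) * t ^ (2 * q) * a0) * x)
            = algebraMap R L (s ^ p * t ^ q * (-(s ^ (p + k) * t ^ q * (r * a0)))) := by
          rw [mul_comm _ x, e2, ← _root_.map_neg]
          rw [show -(s ^ p * t ^ q * (s ^ (p + k) * t ^ q * (r * a0)))
            = s ^ p * t ^ q * (-(s ^ (p + k) * t ^ q * (r * a0))) from by ring]
        exact mul_mem (transv_mem_relESet ⟨u, i, huv, _, hwS, rfl⟩)
          (transv_mem_relESet ⟨u, j, huj, _, ⟨-(s ^ (p + k) * t ^ q * (r * a0)),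
            neg_mem (Ideal.mul_mem_left a _ (Ideal.mul_mem_left a _ ha0)), e3⟩, rfl⟩)
      · -- case a : disjoint
        have hju : j ≠ u := fun h => hu h.symm
        rw [hgdef, SLconj_a i j u v hij huv hju hv x _]
        exact transv_mem_relESet ⟨u, v, huv, _, hwS, rfl⟩
  | one =>
    have h1 : g * 1 * g⁻¹ = 1 := by group
    rw [h1]; exact one_mem _
  | mul y1 y2 h1 h2 ih1 ih2 =>
    have hmul : g * (y1 * y2) * g⁻¹ = (g * y1 * g⁻¹) * (g * y2 * g⁻¹) := by group
    rw [hmul]; exact mul_mem ih1 ih2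
  | inv y1 h1 ih =>
    have hinv : g * y1⁻¹ * g⁻¹ = (g * y1 * g⁻¹)⁻¹ := by group
    rw [hinv]; exact inv_mem ih
end
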